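/- If R is a left ℵ₀-injective ring satisfying the ascending chain condition on right annihilators, then R is left finite dimensional, i.e., R contains no infinite independent family of nonzero left ideals. -/

import Mathlib

/-- A ring `R` is *left ℵ₀-injective* if every homomorphism of left `R`-modules
from a countably generated left ideal of `R` to `R` extends to a homomorphism of
left `R`-modules `R → R`. -/
def IsLeftAleph0Injective (R : Type*) [Ring R] : Prop :=
  ∀ I : Submodule R R,
    (∃ S : Set R, S.Countable ∧ Submodule.span R S = I) →
    ∀ f : I →ₗ[R] R, ∃ g : R →ₗ[R] R, ∀ x : I, g (x : R) = f x

/-- The right annihilator `r(X) = {s ∈ R : x * s = 0 for all x ∈ X}` of a subset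
`X ⊆ R`, as a right ideal of `R`. -/
def rightAnn (R : Type*) [Ring R] (X : Set R) : Submodule Rᵐᵒᵖ R where
  carrier := {s : R | ∀ x ∈ X, x * s = 0}
  zero_mem' := fun x _ => mul_zero x
  add_mem' := fun {a b} ha hb x hx => by rw [mul_add, ha x hx, hb x hx, add_zero]
  smul_mem' := fun c s hs x hx => by
    simp only [Set.mem_setOf_eq, MulOpposite.smul_eq_mul_unop] at *
    rw [← mul_assoc, hs x hx, zero_mul]

/-- `R` satisfies the ascending chain condition on right annihilators: every
ascending chain of right ideals of the form `r(X)` stabilizes. -/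
def ACCRightAnnihilators (R : Type*) [Ring R] : Prop :=
  ∀ X : ℕ → Set R, Monotone (fun i => rightAnn R (X i)) →
    ∃ n, ∀ m, n ≤ m → rightAnn R (X m) = rightAnn R (X n)

/-- If `R` is a left ℵ₀-injective ring with ACC on right annihilators, then `R`
is left finite dimensional: there is no infinite independent family of nonzero
left ideals of `R` (a family `(L i)` being independent when
`L i ⊓ (⨆ j ≠ i, L j) = ⊥` for each `i`). -/
lemma mem_rightAnn_iff' {R : Type*} [Ring R] {X : Set R} {s : R} :
    s ∈ rightAnn R X ↔ ∀ x ∈ X, x * s = 0 := Iff.rfl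

theorem left_finite_dimensional_of_leftAleph0Injective (R : Type*) [Ring R]
    (hinj : IsLeftAleph0Injective R) (hacc : ACCRightAnnihilators R) :
    ∀ {ι : Type*} (L : ι → Submodule R R),
      iSupIndep L → (∀ i, L i ≠ ⊥) → Finite ι := by
  intro ι L hind hne
  by_contra hfin
  have : Infinite ι := not_finite_iff_infinite.mp hfin
  classical
  let e := Infinite.natEmbedding ι
  choose x hx hx0 using fun n : ℕ => Submodule.exists_mem_ne_zero_of_ne_bot (hne (e n))
  set N : ℕ → Submodule R R := fun n => Submodule.span R {x n} with hN
  have hindN : iSupIndep N := (hind.comp e.injective).mono fun n =>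
    (Submodule.span_singleton_le_iff_mem _ _).mpr (hx n)
  -- ACC step
  set X : ℕ → Set R := fun n => x '' Set.Ici n with hX
  have hmono : Monotone fun n => rightAnn R (X n) := by
    intro a b hab s hs y hy
    exact hs y (Set.image_mono (f := x) (Set.Ici_subset_Ici.mpr hab) hy)
  obtain ⟨n, hn⟩ := hacc X hmono
  -- build the projection f onto the n-th component
  set S : Submodule R R := ⨆ i, N i with hS
  have hxS : ∀ i, x i ∈ S :=
    fun i => Submodule.mem_iSup_of_mem i (Submodule.mem_span_singleton_self _)
  let Φ : (Π₀ i, N i) →ₗ[R] R := DFinsupp.lsum ℕ fun i => (N i).subtype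
  have hΦinj : Function.Injective Φ := hindN.dfinsupp_lsum_injective
  have hΦrange : LinearMap.range Φ = S := (Submodule.iSup_eq_range_dfinsupp_lsum N).symm
  let Φ' : (Π₀ i, N i) →ₗ[R] S :=
    Φ.codRestrict S (fun c => hΦrange ▸ LinearMap.mem_range_self Φ c)
  have hΦ'bij : Function.Bijective Φ' := by
    constructor
    · intro a b hab
      exact hΦinj (congrArg Subtype.val hab)
    · rintro ⟨s, hs⟩
      rw [← hΦrange] at hs
      obtain ⟨c, hc⟩ := hs
      exact ⟨c, Subtype.ext hc⟩
  let E : (Π₀ i, N i) ≃ₗ[R] S := LinearEquiv.ofBijective Φ' hΦ'bij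
  let f : S →ₗ[R] R :=
    (N n).subtype ∘ₗ (DFinsupp.lapply n : (Π₀ i, N i) →ₗ[R] N n) ∘ₗ (E.symm : S →ₗ[R] _)
  have hf : ∀ i, f ⟨x i, hxS i⟩ = if i = n then x i else 0 := by
    intro i
    have hsingle :
        E (DFinsupp.single i ⟨x i, Submodule.mem_span_singleton_self _⟩) = ⟨x i, hxS i⟩ := by
      apply Subtype.ext
      simp [E, Φ', Φ]
    have hsymm := congrArg E.symm hsingle
    rw [LinearEquiv.symm_apply_apply] at hsymm
    show ((E.symm ⟨x i, hxS i⟩) n : R) = _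
    rw [← hsymm]
    by_cases hin : i = n
    · subst hin
      simp
    · rw [DFinsupp.single_eq_of_ne (Ne.symm hin), if_neg hin]
      rfl
  obtain ⟨g, hg⟩ := hinj S ⟨Set.range x, Set.countable_range x, by
    rw [Submodule.span_range_eq_iSup]⟩ f
  set c := g 1 with hc
  have hgc : ∀ r : R, g r = r * c := fun r => by
    conv_lhs => rw [← mul_one r, ← smul_eq_mul, map_smul, smul_eq_mul]
  have h0 : ∀ i, i ≠ n → x i * c = 0 := fun i hi => by
    rw [← hgc, hg ⟨x i, hxS i⟩, hf i, if_neg hi]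
  have hxn : x n * c = x n := by
    rw [← hgc, hg ⟨x n, hxS n⟩, hf n, if_pos rfl]
  have hcmem : c ∈ rightAnn R (X (n + 1)) := by
    rw [mem_rightAnn_iff']
    rintro y ⟨i, hi, rfl⟩
    exact h0 i (by simp only [Set.mem_Ici] at hi; omega)
  rw [hn (n + 1) (by omega), mem_rightAnn_iff'] at hcmem
  have : x n * c = 0 := hcmem (x n) ⟨n, le_refl n, rfl⟩
  exact hx0 n (by rw [← hxn, this])
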